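/- Let q > r ≥ 1 and let S be an r-set of vertices. Let F = FakeEdge_q^r(S): take q−r new vertices x_1,…,x_{q−r} and, for each r-subset T ≠ S of S ∪ {x_1,…,x_{q−r}}, attach a copy of AntiEdge_q^r(T) (with its own fresh vertices). Then for every 0 ≤ i ≤ r−1 and every i-subset S' of S, the degree d_F(S') is congruent to +1 modulo C(q−i, r−i). -/

import Mathlib

open Finset

lemma card_filter_supersets {V : Type*} [DecidableEq V] (A S' : Finset V) (hS'A : S' ⊆ A)
    (r : ℕ) (hir : S'.card ≤ r) :
    ((A.powersetCard r).filter (fun e => S' ⊆ e)).card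
      = (A.card - S'.card).choose (r - S'.card) := by
  rw [show (A.card - S'.card).choose (r - S'.card)
      = ((A \ S').powersetCard (r - S'.card)).card by
    rw [Finset.card_powersetCard, Finset.card_sdiff_of_subset hS'A]]
  apply Finset.card_bij' (fun e _ => e \ S') (fun f _ => f ∪ S')
  · intro e he
    rw [Finset.mem_filter, Finset.mem_powersetCard] at he
    rw [Finset.mem_powersetCard]
    refine ⟨Finset.sdiff_subset_sdiff he.1.1 le_rfl, ?_⟩
    rw [Finset.card_sdiff_of_subset he.2, he.1.2]
  · intro f hf
    rw [Finset.mem_powersetCard] at hf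
    have hdisj : Disjoint f S' := Finset.disjoint_of_subset_left hf.1 (Finset.sdiff_disjoint)
    rw [Finset.mem_filter, Finset.mem_powersetCard]
    refine ⟨⟨Finset.union_subset (hf.1.trans (Finset.sdiff_subset)) hS'A, ?_⟩,
      Finset.subset_union_right⟩
    rw [Finset.card_union_of_disjoint hdisj, hf.2]
    omega
  · intro e he
    rw [Finset.mem_filter] at he
    exact Finset.sdiff_union_of_subset he.2
  · intro f hf
    rw [Finset.mem_powersetCard] at hf
    have hdisj : Disjoint f S' := Finset.disjoint_of_subset_left hf.1 (Finset.sdiff_disjoint)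
    exact Finset.union_sdiff_cancel_right hdisj

lemma card_filter_msum {α β : Type*} [DecidableEq β] (s : Finset α) (f : α → Multiset β)
    (p : β → Prop) [DecidablePred p] :
    Multiset.card ((∑ T ∈ s, f T).filter p) = ∑ T ∈ s, Multiset.card ((f T).filter p) := by
  classical
  induction s using Finset.induction with
  | empty => simp
  | insert a s h ih => rw [Finset.sum_insert h, Multiset.filter_add,
      Multiset.card_add, ih, Finset.sum_insert h]

lemma modeq_sum {α : Type*} (s : Finset α) (f g : α → ℕ) (n : ℕ)
    (h : ∀ a ∈ s, f a ≡ g a [MOD n]) : ∑ a ∈ s, f a ≡ ∑ a ∈ s, g a [MOD n] := by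
  classical
  induction s using Finset.induction with
  | empty => simp; rfl
  | @insert a s hmem ih =>
      rw [Finset.sum_insert hmem, Finset.sum_insert hmem]
      exact (h a (Finset.mem_insert_self a s)).add
        (ih fun b hb => h b (Finset.mem_insert_of_mem hb))

lemma sq_pred_modeq (m : ℕ) (hm : 2 ≤ m) : (m - 1) * (m - 1) ≡ 1 [MOD m] := by
  obtain ⟨k, rfl⟩ : ∃ k, m = k + 2 := ⟨m - 2, by omega⟩
  have h : (k + 2 - 1) * (k + 2 - 1) = (k + 2) * k + 1 := by
    have : k + 2 - 1 = k + 1 := by omega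
    rw [this]; ring
  rw [h]
  calc (k + 2) * k + 1 ≡ 0 + 1 [MOD k + 2] :=
        (Nat.modEq_zero_iff_dvd.2 (Dvd.intro k rfl)).add_right 1
    _ = 1 := by omega

/-- Fact 5.2(2): degrees in a fake edge. Let `S` be an `r`-set inside a `q`-set `W`
(`W \ S` are the `q−r` new vertices). For each `r`-subset `T ≠ S` of `W` attach an
anti-edge `AntiEdge_q^r(T)` on a `q`-set `WT T ⊇ T`, all fresh vertex sets `WT T \ T`
pairwise disjoint and disjoint from `W`. Let `F` (the fake edge) be the union of these
anti-edges. Then for every `0 ≤ i ≤ r−1` and `i`-subset `S'` of `S`,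
`d_F(S') ≡ +1 (mod C(q−i, r−i))`. -/
theorem fakeEdge_degree {V : Type*} [DecidableEq V] (q r : ℕ) (hrq : r < q) (hr : 1 ≤ r)
    (S W : Finset V) (hS : S.card = r) (hSW : S ⊆ W) (hW : W.card = q)
    (WT : Finset V → Finset V)
    (hWT : ∀ T ∈ W.powersetCard r \ {S}, T ⊆ WT T ∧ (WT T).card = q)
    (hfresh : ∀ T ∈ W.powersetCard r \ {S}, Disjoint (WT T \ T) W)
    (hdisj : ∀ T₁ ∈ W.powersetCard r \ {S}, ∀ T₂ ∈ W.powersetCard r \ {S}, T₁ ≠ T₂ →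
      Disjoint (WT T₁ \ T₁) (WT T₂ \ T₂))
    (F : Multiset (Finset V))
    (hF : F = ∑ T ∈ W.powersetCard r \ {S}, ((WT T).powersetCard r \ {T}).val)
    (i : ℕ) (hi : i ≤ r - 1) (S' : Finset V) (hS'S : S' ⊆ S) (hS' : S'.card = i) :
    Multiset.card (F.filter fun e => S' ⊆ e) ≡ 1 [MOD Nat.choose (q - i) (r - i)] := by
  classical
  set m := Nat.choose (q - i) (r - i) with hm
  have hir : i < r := by omega
  have hm2 : 2 ≤ m := by
    have h1 : (r - i + 1).choose (r - i) ≤ m := Nat.choose_le_choose _ (by omega)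
    rw [Nat.choose_succ_self_right] at h1
    omega
  -- the set of anti-edge centers
  set 𝒯 := W.powersetCard r \ {S} with h𝒯
  -- per-term degree
  have hterm : ∀ T ∈ 𝒯, Multiset.card ((((WT T).powersetCard r \ {T}).val).filter
      (fun e => S' ⊆ e)) = if S' ⊆ T then m - 1 else if S' ⊆ WT T then m else 0 := by
    intro T hT
    obtain ⟨hTsub, hTcard⟩ := hWT T hT
    have hTmem : T ∈ (WT T).powersetCard r := by
      rw [Finset.mem_powersetCard]
      have : T.card = r := by
        rw [h𝒯, Finset.mem_sdiff, Finset.mem_powersetCard] at hT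
        exact hT.1.2
      exact ⟨hTsub, this⟩
    have key : Multiset.card ((((WT T).powersetCard r \ {T}).val).filter (fun e => S' ⊆ e))
        = ((((WT T).powersetCard r \ {T})).filter (fun e => S' ⊆ e)).card := rfl
    rw [key]
    have hsplit : ((WT T).powersetCard r).filter (fun e => S' ⊆ e)
        = (((WT T).powersetCard r \ {T}).filter (fun e => S' ⊆ e))
          ∪ (({T} : Finset (Finset V)).filter (fun e => S' ⊆ e)) := by
      rw [← Finset.filter_union, Finset.sdiff_union_of_subset (Finset.singleton_subset_iff.2 hTmem)]
    have hdisj2 : Disjoint (((WT T).powersetCard r \ {T}).filter (fun e => S' ⊆ e))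
        (({T} : Finset (Finset V)).filter (fun e => S' ⊆ e)) :=
      Finset.disjoint_filter_filter (Finset.sdiff_disjoint)
    have hcards := congrArg Finset.card hsplit
    rw [Finset.card_union_of_disjoint hdisj2] at hcards
    by_cases hS'WT : S' ⊆ WT T
    · have hcount : (((WT T).powersetCard r).filter (fun e => S' ⊆ e)).card = m := by
        rw [card_filter_supersets _ _ hS'WT _ (by omega : S'.card ≤ r), hTcard, hS']
      by_cases hS'T : S' ⊆ T
      · have : (({T} : Finset (Finset V)).filter (fun e => S' ⊆ e)) = {T} := by
          rw [Finset.filter_eq_self]; intro x hx; rw [Finset.mem_singleton] at hx; subst hx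
          exact hS'T
        rw [this, Finset.card_singleton] at hcards
        simp only [hS'T, if_true]
        omega
      · have : (({T} : Finset (Finset V)).filter (fun e => S' ⊆ e)) = ∅ := by
          rw [Finset.filter_eq_empty_iff]; intro x hx; rw [Finset.mem_singleton] at hx
          subst hx; exact hS'T
        rw [this, Finset.card_empty] at hcards
        simp only [hS'T, if_false, hS'WT, if_true]
        omega
    · have hS'T : ¬ S' ⊆ T := fun h => hS'WT (h.trans hTsub)
      simp only [hS'T, if_false, hS'WT, if_false]
      rw [Finset.card_eq_zero, Finset.filter_eq_empty_iff]
      intro e he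
      rw [Finset.mem_sdiff, Finset.mem_powersetCard] at he
      exact fun hc => hS'WT (hc.trans he.1.1)
  -- total degree
  rw [hF, card_filter_msum, Finset.sum_congr rfl hterm]
  -- the count of T containing S'
  have hScount : (𝒯.filter (fun T => S' ⊆ T)).card = m - 1 := by
    have heq : 𝒯.filter (fun T => S' ⊆ T)
        = ((W.powersetCard r).filter (fun T => S' ⊆ T)) \ {S} := by
      ext x
      simp only [h𝒯, Finset.mem_filter, Finset.mem_sdiff, Finset.mem_singleton]
      tauto
    have hSmem : S ∈ (W.powersetCard r).filter (fun T => S' ⊆ T) := by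
      rw [Finset.mem_filter, Finset.mem_powersetCard]
      exact ⟨⟨hSW, hS⟩, hS'S⟩
    rw [heq, Finset.card_sdiff_of_subset (Finset.singleton_subset_iff.2 hSmem), Finset.card_singleton,
      card_filter_supersets _ _ (hS'S.trans hSW) _ (by omega : S'.card ≤ r), hW, hS']
  -- reduce each summand mod m
  have hcong : ∑ T ∈ 𝒯, (if S' ⊆ T then m - 1 else if S' ⊆ WT T then m else 0)
      ≡ ∑ T ∈ 𝒯, (if S' ⊆ T then m - 1 else 0) [MOD m] := by
    apply modeq_sum
    intro T _
    by_cases h1 : S' ⊆ T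
    · simp only [h1, if_true]; rfl
    · simp only [h1, if_false]
      by_cases h2 : S' ⊆ WT T
      · simp only [h2, if_true]
        exact (Nat.modEq_zero_iff_dvd.2 dvd_rfl)
      · simp only [h2, if_false]; rfl
  have hsum : ∑ T ∈ 𝒯, (if S' ⊆ T then m - 1 else 0) = (m - 1) * (m - 1) := by
    rw [← Finset.sum_filter, Finset.sum_const, hScount, smul_eq_mul]
  refine hcong.trans ?_
  rw [hsum]
  exact sq_pred_modeq m hm2
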